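/- Let (Γ,S) be a δ-hyperbolic group, let R > 0, d ∈ ℕ, C₁₈, C₁₉ ≥ 0, and let Θ'_* : C_*(Γ;ℂ) → C_*(Γ;ℂ) be a Γ-equivariant chain map with Θ'₀ = id, Θ'ₙ = 0 for all n ≥ d, image contained in C_*^R(Γ;ℂ), Supp(Θ'(α)) ⊆ geod_{C₁₈}(Supp(α)) and ∥Θ'(α)∥₁ ≤ C₁₉·(diam(Supp(α))+1) for every simplex α. Define ∇̃ on C_*(Γ,Ad(ℂΓ)) by ∇̃[g₀,…,gₙ;v] = Σ_{i=0}^{n} (−1)^i [Θ'([g₀,…,g_i]), g_i,…,gₙ; v]. Then: (i) ∂∘∇̃ + ∇̃∘∂ = Id in every degree ≥ d; (ii) there is a constant C₂₀ ≥ 0 (depending only on δ, R, d, C₁₈) such that for every twisted simplex α, every simplex occurring in ∇̃(α) with nonzero coefficient has weight at most |α| + C₂₀; (iii) there is a constant C₂₁ ≥ 0 (depending only on d and C₁₉) such that ∥∇̃([g₀,…,gₙ;v])∥₁ ≤ C₂₁·(1 + d_S(g₀,g₁) + ⋯ + d_S(g_{k−1},g_k)) with k = min(n,d), for all n and all g₀,…,gₙ,v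 ∈ Γ. -/

import Mathlib

noncomputable section

open Finsupp

/-- Word length with respect to a generating set `S`. -/
def wordLen {Γ : Type} [Group Γ] (S : Set Γ) (g : Γ) : ℕ :=
  sInf {n | ∃ l : List Γ, (∀ x ∈ l, x ∈ S) ∧ l.length = n ∧ l.prod = g}

/-- The word metric `d_S(g,h) = ℓ_S(g⁻¹h)`. -/
def dS {Γ : Type} [Group Γ] (S : Set Γ) (g h : Γ) : ℕ := wordLen S (g⁻¹ * h)

/-- The Gromov product `(x|y)_w` with respect to the word metric. -/
def gpS {Γ : Type} [Group Γ] (S : Set Γ) (x y w : Γ) : ℝ :=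
  ((dS S x w : ℝ) + (dS S y w : ℝ) - (dS S x y : ℝ)) / 2

/-- `(Γ,S)` is a `δ`-hyperbolic group: `S` is a finite symmetric generating set and
the word metric satisfies the four point condition with constant `δ`. -/
def IsHypGroup {Γ : Type} [Group Γ] (S : Set Γ) (δ : ℝ) : Prop :=
  S.Finite ∧ (∀ s ∈ S, s⁻¹ ∈ S) ∧ Subgroup.closure S = ⊤ ∧
  ∀ x y z w : Γ, min (gpS S x y w) (gpS S y z w) - δ ≤ gpS S x z w

/-- The degree-`n` part of the Bar chain complex of `Γ` with complex coefficients. -/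
abbrev BarC (Γ : Type) (n : ℕ) : Type := (Fin (n+1) → Γ) →₀ ℂ

/-- The simplicial differential of the Bar chain complex. -/
def barD (Γ : Type) (n : ℕ) : BarC Γ (n+1) →ₗ[ℂ] BarC Γ n :=
  Finsupp.lsum ℂ fun x => ∑ i : Fin (n+2), ((-1:ℂ)^(i:ℕ)) •
    (Finsupp.lsingle (x ∘ i.succAbove) : ℂ →ₗ[ℂ] BarC Γ n)

/-- The `Γ`-action on Bar chains by left translation. -/
def actB {Γ : Type} [Group Γ] (g : Γ) (n : ℕ) : BarC Γ n →ₗ[ℂ] BarC Γ n :=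
  Finsupp.lmapDomain ℂ ℂ fun t => fun j => g * t j

/-- The support of a Bar chain: the union of the supports of the simplices occurring
with nonzero coefficient. -/
def chainSupp {Γ : Type} {n : ℕ} (c : BarC Γ n) : Set Γ :=
  {x | ∃ t ∈ c.support, ∃ j, t j = x}

/-- The λ-geodesic hull
`geod_λ(Y) = {x : ∃ y,y' ∈ Y, d(y,x)+d(x,y') ≤ d(y,y')+λ}`. -/
def geodN {Γ : Type} [Group Γ] (S : Set Γ) (lam : ℝ) (Y : Set Γ) : Set Γ :=
  {x | ∃ y ∈ Y, ∃ y' ∈ Y, (dS S y x : ℝ) + (dS S x y' : ℝ) ≤ (dS S y y' : ℝ) + lam}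

/-- The `ℓ¹`-norm of a Bar chain. -/
def l1norm {Γ : Type} {n : ℕ} (c : BarC Γ n) : ℝ := ∑ t ∈ c.support, ‖c t‖

/-- The diameter of (the support of) a simplex in the word metric. -/
def tupDiam {Γ : Type} [Group Γ] (S : Set Γ) {n : ℕ} (t : Fin (n+1) → Γ) : ℕ :=
  Finset.univ.sup fun p : Fin (n+1) × Fin (n+1) => dS S (t p.1) (t p.2)

/-- The twisted Bar complex `C_*(Γ, Ad(ℂΓ))`, with basis the symbols `[g₀,…,gₙ;v]`. -/
abbrev TBar (Γ : Type) (n : ℕ) : Type := ((Fin (n+1) → Γ) × Γ) →₀ ℂ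

/-- The simplicial differential on the twisted Bar complex. -/
def tbarD (Γ : Type) (n : ℕ) : TBar Γ (n+1) →ₗ[ℂ] TBar Γ n :=
  Finsupp.lsum ℂ fun gv => ∑ i : Fin (n+2), ((-1:ℂ)^(i:ℕ)) •
    (Finsupp.lsingle (gv.1 ∘ i.succAbove, gv.2) : ℂ →ₗ[ℂ] TBar Γ n)

/-- A chain is supported on the Rips complex of parameter `R` if all simplices in its
support have pairwise distances at most `R`. -/
def InRips {Γ : Type} [Group Γ] (S : Set Γ) (R : ℝ) {n : ℕ} (c : BarC Γ n) : Prop :=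
  ∀ u ∈ c.support, ∀ i j : Fin (n+1), (dS S (u i) (u j) : ℝ) ≤ R

/-- The weight `|[g₀,…,gₙ;v]| = d(g₀,g₁)+⋯+d(g_{n−1},gₙ)+d(gₙ,vg₀)`. -/
def twt {Γ : Type} [Group Γ] (S : Set Γ) (v : Γ) {n : ℕ} (g : Fin (n+1) → Γ) : ℕ :=
  (∑ i : Fin n, dS S (g i.castSucc) (g i.succ)) + dS S (g (Fin.last n)) (v * g 0)

/-- The `ℓ¹`-norm of a twisted Bar chain. -/
def l1T {Γ : Type} {n : ℕ} (c : TBar Γ n) : ℝ := ∑ t ∈ c.support, ‖c t‖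

/-- The weighted `ℓ¹`-norm `∥Σ aα·α∥_λ = Σ|aα|·λ^{|α|}` on twisted Bar chains. -/
def tnormP {Γ : Type} [Group Γ] (S : Set Γ) (lam : ℝ) {n : ℕ} (c : TBar Γ n) : ℝ :=
  ∑ t ∈ c.support, ‖c t‖ * lam ^ (twt S t.2 t.1)

/-- The front part `[g₀,…,g_i]` of a tuple. -/
def frontTuple {Γ : Type} {n : ℕ} (i : Fin (n+1)) (g : Fin (n+1) → Γ) :
    Fin ((i:ℕ)+1) → Γ := fun j => g (Fin.castLE (by have := i.isLt; omega) j)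

/-- Appending the tail `g_i,…,gₙ` (and twisting element `v`) to a chain of
`(i+1)`-tuples: this realizes `c ↦ [c, g_i,…,gₙ; v]`. -/
def appendTv {Γ : Type} {n : ℕ} (i : Fin (n+1)) (g : Fin (n+1) → Γ) (v : Γ) :
    BarC Γ (i:ℕ) →ₗ[ℂ] TBar Γ (n+1) :=
  Finsupp.lmapDomain ℂ ℂ fun a => (fun k : Fin (n+2) =>
    if h : (k:ℕ) < (i:ℕ)+1 then a ⟨k, h⟩
    else g ⟨(k:ℕ)-1, by have := k.isLt; omega⟩, v)

/-- The operator `∇̃[g₀,…,gₙ;v] = Σᵢ(−1)^i [Θ'([g₀,…,g_i]), g_i,…,gₙ; v]`. -/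
def nablaT {Γ : Type} [Group Γ] (Θ : ∀ m, BarC Γ m →ₗ[ℂ] BarC Γ m) (n : ℕ) :
    TBar Γ n →ₗ[ℂ] TBar Γ (n+1) :=
  Finsupp.lsum ℂ fun gv => LinearMap.toSpanSingleton ℂ _
    (∑ i : Fin (n+1), ((-1:ℂ)^(i:ℕ)) •
      (appendTv i gv.1 gv.2) (Θ (i:ℕ) (Finsupp.single (frontTuple i gv.1) 1)))

/-! ### Auxiliary lemmas -/

section MetricAux
variable {Γ : Type} [Group Γ] {S : Set Γ}

lemma exists_word' (hsym : ∀ s ∈ S, s⁻¹ ∈ S) (hgen : Subgroup.closure S = ⊤) (g : Γ) :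
    ∃ l : List Γ, (∀ x ∈ l, x ∈ S) ∧ l.prod = g := by
  have hg : g ∈ Subgroup.closure S := by rw [hgen]; trivial
  induction hg using Subgroup.closure_induction with
  | mem x hx => exact ⟨[x], by simp [hx]⟩
  | one => exact ⟨[], by simp⟩
  | mul x y _ _ ihx ihy =>
    obtain ⟨l1, h1, p1⟩ := ihx
    obtain ⟨l2, h2, p2⟩ := ihy
    refine ⟨l1 ++ l2, ?_, by simp [p1, p2]⟩
    intro x hx; rcases List.mem_append.1 hx with h | h
    exacts [h1 x h, h2 x h]
  | inv x _ ihx =>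
    obtain ⟨l, h1, p1⟩ := ihx
    refine ⟨(l.map fun x => x⁻¹).reverse, ?_, by rw [← List.prod_inv_reverse, p1]⟩
    intro x hx
    simp only [List.mem_reverse, List.mem_map] at hx
    obtain ⟨a, ha, rfl⟩ := hx
    exact hsym a (h1 a ha)

lemma wordLen_le' {g : Γ} {l : List Γ} (hl : ∀ x ∈ l, x ∈ S) (hp : l.prod = g) :
    wordLen S g ≤ l.length := Nat.sInf_le ⟨l, hl, rfl, hp⟩

lemma wordLen_spec (hsym : ∀ s ∈ S, s⁻¹ ∈ S) (hgen : Subgroup.closure S = ⊤) (g : Γ) :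
    ∃ l : List Γ, (∀ x ∈ l, x ∈ S) ∧ l.length = wordLen S g ∧ l.prod = g := by
  have hne : {n | ∃ l : List Γ, (∀ x ∈ l, x ∈ S) ∧ l.length = n ∧ l.prod = g}.Nonempty := by
    obtain ⟨l, h1, h2⟩ := exists_word' hsym hgen g
    exact ⟨l.length, l, h1, rfl, h2⟩
  exact Nat.sInf_mem hne

lemma wordLen_one' : wordLen S (1 : Γ) = 0 :=
  Nat.le_zero.1 (by simpa using wordLen_le' (l := []) (by simp) (by simp))

lemma wordLen_mul_le (hsym : ∀ s ∈ S, s⁻¹ ∈ S) (hgen : Subgroup.closure S = ⊤) (g h : Γ) :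
    wordLen S (g * h) ≤ wordLen S g + wordLen S h := by
  obtain ⟨l1, m1, len1, p1⟩ := wordLen_spec hsym hgen g
  obtain ⟨l2, m2, len2, p2⟩ := wordLen_spec hsym hgen h
  calc wordLen S (g * h) ≤ (l1 ++ l2).length := wordLen_le'
        (by intro x hx; rcases List.mem_append.1 hx with h | h; exacts [m1 x h, m2 x h])
        (by simp [p1, p2])
    _ = wordLen S g + wordLen S h := by simp [len1, len2]

lemma word_mem_shift (hsym : ∀ s ∈ S, s⁻¹ ∈ S) (g : Γ) (n : ℕ)
    (hn : n ∈ {n | ∃ l : List Γ, (∀ x ∈ l, x ∈ S) ∧ l.length = n ∧ l.prod = g}) :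
    n ∈ {n | ∃ l : List Γ, (∀ x ∈ l, x ∈ S) ∧ l.length = n ∧ l.prod = g⁻¹} := by
  obtain ⟨l, h1, h2, h3⟩ := hn
  refine ⟨(l.map fun x => x⁻¹).reverse, ?_, by simp [h2], by rw [← List.prod_inv_reverse, h3]⟩
  intro x hx
  simp only [List.mem_reverse, List.mem_map] at hx
  obtain ⟨a, ha, rfl⟩ := hx
  exact hsym a (h1 a ha)

lemma wordLen_inv (hsym : ∀ s ∈ S, s⁻¹ ∈ S) (g : Γ) : wordLen S g⁻¹ = wordLen S g := by
  unfold wordLen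
  congr 1
  apply Set.Subset.antisymm
  · intro n hn
    simpa using word_mem_shift hsym g⁻¹ n hn
  · exact fun n hn => word_mem_shift hsym g n hn

lemma dS_self (g : Γ) : dS S g g = 0 := by
  unfold dS; simpa using wordLen_one'

lemma dS_symm (hsym : ∀ s ∈ S, s⁻¹ ∈ S) (g h : Γ) : dS S g h = dS S h g := by
  unfold dS
  rw [← wordLen_inv hsym (g⁻¹ * h)]
  congr 1
  simp [mul_inv_rev]

lemma dS_mulLeft (v g h : Γ) : dS S (v * g) (v * h) = dS S g h := by
  unfold dS
  congr 1
  simp [mul_inv_rev, mul_assoc]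

lemma dS_triangle (hsym : ∀ s ∈ S, s⁻¹ ∈ S) (hgen : Subgroup.closure S = ⊤) (g k h : Γ) :
    dS S g h ≤ dS S g k + dS S k h := by
  unfold dS
  calc wordLen S (g⁻¹ * h) = wordLen S ((g⁻¹ * k) * (k⁻¹ * h)) := by congr 1; group
    _ ≤ _ := wordLen_mul_le hsym hgen _ _

lemma dS_path (hsym : ∀ s ∈ S, s⁻¹ ∈ S) (hgen : Subgroup.closure S = ⊤) (x : ℕ → Γ) :
    ∀ p q, p ≤ q →
    dS S (x p) (x q) ≤ ∑ j ∈ Finset.Ico p q, dS S (x j) (x (j+1)) := by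
  intro p q hpq
  induction q with
  | zero =>
    interval_cases p
    simp [dS_self]
  | succ q ih =>
    rcases Nat.lt_or_ge p (q+1) with h | h
    · have hp : p ≤ q := by omega
      rw [Finset.sum_Ico_succ_top hp]
      calc dS S (x p) (x (q+1)) ≤ dS S (x p) (x q) + dS S (x q) (x (q+1)) :=
            dS_triangle hsym hgen _ _ _
        _ ≤ _ := Nat.add_le_add_right (ih hp) _
    · have : p = q + 1 := by omega
      subst this
      simp [dS_self]

end MetricAux
section L1Aux

/-- General ℓ¹ norm on finitely supported functions. -/
def l1F {β : Type} (c : β →₀ ℂ) : ℝ := ∑ t ∈ c.support, ‖c t‖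

variable {β γ : Type}

lemma l1F_zero : l1F (0 : β →₀ ℂ) = 0 := by simp [l1F]

lemma l1F_nonneg (c : β →₀ ℂ) : 0 ≤ l1F c :=
  Finset.sum_nonneg fun _ _ => norm_nonneg _

lemma l1F_eq_sum_subset {c : β →₀ ℂ} {s : Finset β} (hs : c.support ⊆ s) :
    l1F c = ∑ t ∈ s, ‖c t‖ := by
  refine Finset.sum_subset hs fun x _ hx => ?_
  simp [Finsupp.notMem_support_iff.1 hx]

lemma l1F_add_le (c₁ c₂ : β →₀ ℂ) : l1F (c₁ + c₂) ≤ l1F c₁ + l1F c₂ := by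
  classical
  rw [l1F_eq_sum_subset (s := c₁.support ∪ c₂.support) Finsupp.support_add,
    l1F_eq_sum_subset (s := c₁.support ∪ c₂.support) Finset.subset_union_left (c := c₁),
    l1F_eq_sum_subset (s := c₁.support ∪ c₂.support) Finset.subset_union_right (c := c₂),
    ← Finset.sum_add_distrib]
  refine Finset.sum_le_sum fun i _ => ?_
  rw [Finsupp.add_apply]
  exact norm_add_le _ _

lemma l1F_smul (a : ℂ) (c : β →₀ ℂ) : l1F (a • c) = ‖a‖ * l1F c := by
  rcases eq_or_ne a 0 with rfl | ha
  · simp [l1F_zero, l1F]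
  · rw [l1F, l1F, Finsupp.support_smul_eq ha, Finset.mul_sum]
    exact Finset.sum_congr rfl fun x _ => by simp [norm_mul]

lemma l1F_finsetSum_le {ι : Type*} (s : Finset ι) (f : ι → (β →₀ ℂ)) :
    l1F (∑ i ∈ s, f i) ≤ ∑ i ∈ s, l1F (f i) := by
  classical
  induction s using Finset.cons_induction with
  | empty => simp [l1F_zero]
  | cons i s his ih =>
    rw [Finset.sum_cons, Finset.sum_cons]
    exact (l1F_add_le _ _).trans (by linarith)

lemma l1F_single_le (b : β) (z : ℂ) : l1F (Finsupp.single b z) ≤ ‖z‖ := by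
  rcases eq_or_ne z 0 with rfl | hz
  · simp [l1F]
  · simp [l1F, Finsupp.support_single_ne_zero _ hz]

lemma l1F_mapDomain_le (f : β → γ) (c : β →₀ ℂ) : l1F (Finsupp.mapDomain f c) ≤ l1F c := by
  rw [Finsupp.mapDomain, Finsupp.sum]
  refine (l1F_finsetSum_le _ _).trans ?_
  exact Finset.sum_le_sum fun a _ => l1F_single_le _ _

end L1Aux
section NablaAux

/-- Deletion of the `k`-th entry of a tuple, with a natural-number index. -/
def delF {Γ : Type} {p : ℕ} (k : ℕ) (x : Fin (p+1) → Γ) : Fin p → Γ :=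
  fun j => if (j:ℕ) < k then x j.castSucc else x j.succ

lemma comp_succAbove_eq_delF {Γ : Type} {p : ℕ} (k : Fin (p+2)) (x : Fin (p+2) → Γ) :
    x ∘ k.succAbove = delF (k:ℕ) x := by
  funext j
  simp only [Function.comp_apply, Fin.succAbove, delF]
  by_cases h : (j:ℕ) < (k:ℕ)
  · rw [if_pos (by simpa [Fin.lt_def] using h), if_pos h]
  · rw [if_neg (by simpa [Fin.lt_def] using h), if_neg h]

/-- The tuple part of the function underlying `appendTv`. -/
def apT {Γ : Type} {n : ℕ} (i : Fin (n+1)) (g : Fin (n+1) → Γ) (a : Fin ((i:ℕ)+1) → Γ) :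
    Fin (n+2) → Γ := fun k =>
  if h : (k:ℕ) < (i:ℕ)+1 then a ⟨k, h⟩
  else g ⟨(k:ℕ)-1, by have := k.isLt; omega⟩

lemma appendTv_eq {Γ : Type} {n : ℕ} (i : Fin (n+1)) (g : Fin (n+1) → Γ) (v : Γ)
    (c : BarC Γ (i:ℕ)) :
    appendTv i g v c = Finsupp.mapDomain (fun a => (apT i g a, v)) c := rfl

lemma nablaT_single {Γ : Type} [Group Γ] (Θ : ∀ m, BarC Γ m →ₗ[ℂ] BarC Γ m) (n : ℕ)
    (g : Fin (n+1) → Γ) (v : Γ) :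
    nablaT Θ n (Finsupp.single (g, v) 1) =
      ∑ i : Fin (n+1), ((-1:ℂ)^(i:ℕ)) •
        Finsupp.mapDomain (fun a => (apT i g a, v))
          (Θ (i:ℕ) (Finsupp.single (frontTuple i g) 1)) := by
  unfold nablaT
  rw [Finsupp.lsum_single, LinearMap.toSpanSingleton_apply_one]
  exact Finset.sum_congr rfl fun i _ => by rw [appendTv_eq]

lemma tbarD_single {Γ : Type} (p : ℕ) (x : Fin (p+2) → Γ) (v : Γ) (b : ℂ) :
    tbarD Γ p (Finsupp.single (x, v) b) =
      ∑ k : Fin (p+2), ((-1:ℂ)^(k:ℕ)) • Finsupp.single (x ∘ k.succAbove, v) b := by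
  unfold tbarD
  rw [Finsupp.lsum_single]
  simp [Finsupp.lsingle]

lemma barD_single {Γ : Type} (p : ℕ) (x : Fin (p+2) → Γ) (b : ℂ) :
    barD Γ p (Finsupp.single x b) =
      ∑ k : Fin (p+2), ((-1:ℂ)^(k:ℕ)) • Finsupp.single (x ∘ k.succAbove) b := by
  unfold barD
  rw [Finsupp.lsum_single]
  simp [Finsupp.lsingle]

lemma tbarD_mapDomain {Γ : Type} (p : ℕ) {β : Type} (f : β → (Fin (p+2) → Γ)) (v : Γ)
    (c : β →₀ ℂ) :
    tbarD Γ p (Finsupp.mapDomain (fun a => (f a, v)) c) =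
      ∑ k : Fin (p+2), ((-1:ℂ)^(k:ℕ)) •
        Finsupp.mapDomain (fun a => (f a ∘ k.succAbove, v)) c := by
  induction c using Finsupp.induction_linear with
  | zero => simp
  | add c1 c2 h1 h2 =>
    simp only [Finsupp.mapDomain_add, map_add, h1, h2, smul_add, Finset.sum_add_distrib]
  | single a b =>
    rw [Finsupp.mapDomain_single, tbarD_single]
    exact Finset.sum_congr rfl fun k _ => by rw [Finsupp.mapDomain_single]

lemma barD_mapDomain {Γ : Type} (p : ℕ) {β : Type} (f : β → (Fin (p+2) → Γ))
    (c : β →₀ ℂ) :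
    barD Γ p (Finsupp.mapDomain f c) =
      ∑ k : Fin (p+2), ((-1:ℂ)^(k:ℕ)) •
        Finsupp.mapDomain (fun a => f a ∘ k.succAbove) c := by
  induction c using Finsupp.induction_linear with
  | zero => simp
  | add c1 c2 h1 h2 =>
    simp only [Finsupp.mapDomain_add, map_add, h1, h2, smul_add, Finset.sum_add_distrib]
  | single a b =>
    rw [Finsupp.mapDomain_single, barD_single]
    exact Finset.sum_congr rfl fun k _ => by rw [Finsupp.mapDomain_single]

end NablaAux
section PathAux
variable {Γ : Type} [Group Γ] {S : Set Γ}

lemma dS_le_range_sum (hsym : ∀ s ∈ S, s⁻¹ ∈ S) (hgen : Subgroup.closure S = ⊤)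
    (x : ℕ → Γ) {p q D : ℕ} (hp : p ≤ D) (hq : q ≤ D) :
    dS S (x p) (x q) ≤ ∑ j ∈ Finset.range D, dS S (x j) (x (j+1)) := by
  have key : ∀ a b : ℕ, a ≤ b → b ≤ D →
      dS S (x a) (x b) ≤ ∑ j ∈ Finset.range D, dS S (x j) (x (j+1)) := by
    intro a b hab hbD
    refine (dS_path hsym hgen x a b hab).trans ?_
    rw [Finset.range_eq_Ico]
    exact Finset.sum_le_sum_of_subset (Finset.Ico_subset_Ico (Nat.zero_le _) hbD)
  rcases le_total p q with h | h
  · exact key p q h hq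
  · rw [dS_symm hsym]; exact key q p h hp

end PathAux
section TwtAux
variable {Γ : Type} [Group Γ] {S : Set Γ}

lemma twt_bound (hsym : ∀ s ∈ S, s⁻¹ ∈ S) (hgen : Subgroup.closure S = ⊤)
    {n : ℕ} (i : Fin (n+1)) (g : Fin (n+1) → Γ) (v : Γ) (a : Fin ((i:ℕ)+1) → Γ)
    {R C₁₈ : ℝ} (hR : 0 ≤ R) (hC : 0 ≤ C₁₈)
    (hRa : ∀ j j' : Fin ((i:ℕ)+1), (dS S (a j) (a j') : ℝ) ≤ R)
    (hgeo : a (Fin.last (i:ℕ)) ∈ geodN S C₁₈ (Set.range (frontTuple i g))) :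
    (twt S v (apT i g a) : ℝ) ≤ (twt S v g : ℝ) + ((i:ℕ)+1) * R + C₁₈ := by
  have hin : (i:ℕ) ≤ n := by have := i.isLt; omega
  set gx : ℕ → Γ := fun t => g ⟨min t n, by omega⟩ with hgxdef
  set ax : ℕ → Γ := fun t => a ⟨min t (i:ℕ), by omega⟩ with haxdef
  set X : ℕ → Γ := fun t => apT i g a ⟨min t (n+1), by omega⟩ with hXdef
  have hgxv : ∀ (t : ℕ) (h : t < n+1), t ≤ n → g ⟨t, h⟩ = gx t := by
    intro t h ht; simp only [hgxdef]; congr 1; apply Fin.ext; simp; omega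
  have haxv : ∀ (t : ℕ) (h : t < (i:ℕ)+1), t ≤ (i:ℕ) → a ⟨t, h⟩ = ax t := by
    intro t h ht; simp only [haxdef]; congr 1; apply Fin.ext; simp; omega
  have hXv : ∀ (t : ℕ) (h : t < n+2), t ≤ n+1 → apT i g a ⟨t, h⟩ = X t := by
    intro t h ht; simp only [hXdef]; congr 1; apply Fin.ext; simp; omega
  have hXa : ∀ (t : ℕ), t ≤ (i:ℕ) → X t = ax t := by
    intro t ht
    rw [← hXv t (by omega) (by omega), apT, dif_pos (by simp; omega : ((⟨t, by omega⟩ : Fin (n+2)):ℕ) < (i:ℕ)+1)]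
    exact haxv t (by omega) ht
  have hXg : ∀ (t : ℕ), (i:ℕ)+1 ≤ t → t ≤ n+1 → X t = gx (t-1) := by
    intro t h1 h2
    rw [← hXv t (by omega) h2, apT, dif_neg (by simp; omega : ¬ ((⟨t, by omega⟩ : Fin (n+2)):ℕ) < (i:ℕ)+1)]
    exact hgxv (t-1) (by omega) (by omega)
  set w : Γ := a (Fin.last (i:ℕ)) with hwdef
  have hw : w = ax (i:ℕ) := by
    rw [hwdef, ← haxv (i:ℕ) (by omega) (le_refl _)]
    congr 1
  -- geodesic pair, wlog ordered
  obtain ⟨y, hy, y', hy', hyy'⟩ := hgeo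
  obtain ⟨p, hp⟩ := hy
  obtain ⟨q, hq⟩ := hy'
  have hfront : ∀ r : Fin ((i:ℕ)+1), frontTuple i g r = gx (r:ℕ) := by
    intro r
    show g _ = gx _
    rw [← hgxv (r:ℕ) (by have := r.isLt; omega) (by have := r.isLt; omega)]
    congr 1
  rw [← hp, hfront p] at hyy'
  rw [← hq, hfront q] at hyy'
  have hordered : ∃ p' q' : ℕ, p' ≤ q' ∧ q' ≤ (i:ℕ) ∧
      (dS S (gx p') w : ℝ) + (dS S w (gx q') : ℝ) ≤ (dS S (gx p') (gx q') : ℝ) + C₁₈ := by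
    rcases le_total (p:ℕ) (q:ℕ) with h | h
    · exact ⟨p, q, h, by have := q.isLt; omega, hyy'⟩
    · refine ⟨q, p, h, by have := p.isLt; omega, ?_⟩
      rw [dS_symm hsym (gx (q:ℕ)) w, dS_symm hsym w (gx (p:ℕ)),
        dS_symm hsym (gx (q:ℕ)) (gx (p:ℕ))]
      push_cast
      push_cast at hyy'
      linarith [hyy']
  obtain ⟨p', q', hpq, hqi, hgeo2⟩ := hordered
  -- cast triangle inequality
  have tri : ∀ x y z : Γ, (dS S x z : ℝ) ≤ (dS S x y : ℝ) + (dS S y z : ℝ) := by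
    intro x y z; exact_mod_cast dS_triangle hsym hgen x y z
  have hpath : ∀ u u', u ≤ u' → u' ≤ n →
      (dS S (gx u) (gx u') : ℝ) ≤ ∑ t ∈ Finset.Ico u u', (dS S (gx t) (gx (t+1)) : ℝ) := by
    intro u u' h1 h2
    have h3 := dS_path hsym hgen gx u u' h1
    calc (dS S (gx u) (gx u') : ℝ) ≤
        ((∑ t ∈ Finset.Ico u u', dS S (gx t) (gx (t+1)) : ℕ) : ℝ) := by exact_mod_cast h3
      _ = _ := by push_cast; ring
  -- expand twt of the appended tuple
  have hT : (twt S v (apT i g a) : ℝ) =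
      (∑ t ∈ Finset.range (n+1), (dS S (X t) (X (t+1)) : ℝ))
      + (dS S (X (n+1)) (v * X 0) : ℝ) := by
    rw [twt]
    push_cast
    congr 1
    · rw [← Fin.sum_univ_eq_sum_range (fun t => (dS S (X t) (X (t+1)) : ℝ)) (n+1)]
      refine Finset.sum_congr rfl fun j _ => ?_
      have e1 : apT i g a j.castSucc = X (j:ℕ) := by
        rw [← hXv (j:ℕ) (by have := j.isLt; omega) (by have := j.isLt; omega)]
        congr 1
      have e2 : apT i g a j.succ = X ((j:ℕ)+1) := by
        rw [← hXv ((j:ℕ)+1) (by have := j.isLt; omega) (by have := j.isLt; omega)]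
        congr 1 <;> (apply Fin.ext; simp)
      rw [e1, e2]
    · have e3 : apT i g a (Fin.last (n+1)) = X (n+1) := by
        rw [← hXv (n+1) (by omega) (by omega)]; congr 1
      have e4 : apT i g a 0 = X 0 := by
        rw [← hXv 0 (by omega) (by omega)]; congr 1
      rw [e3, e4]
  -- expand twt of the original tuple
  have hTg : (twt S v g : ℝ) =
      (∑ t ∈ Finset.range n, (dS S (gx t) (gx (t+1)) : ℝ))
      + (dS S (gx n) (v * gx 0) : ℝ) := by
    rw [twt]
    push_cast
    congr 1
    · rw [← Fin.sum_univ_eq_sum_range (fun t => (dS S (gx t) (gx (t+1)) : ℝ)) n]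
      refine Finset.sum_congr rfl fun j _ => ?_
      have e1 : g j.castSucc = gx (j:ℕ) := by
        rw [← hgxv (j:ℕ) (by have := j.isLt; omega) (by have := j.isLt; omega)]
        congr 1
      have e2 : g j.succ = gx ((j:ℕ)+1) := by
        rw [← hgxv ((j:ℕ)+1) (by have := j.isLt; omega) (by have := j.isLt; omega)]
        congr 1 <;> (apply Fin.ext; simp)
      rw [e1, e2]
    · have e3 : g (Fin.last n) = gx n := by
        rw [← hgxv n (by omega) (by omega)]; congr 1
      have e4 : g 0 = gx 0 := by
        rw [← hgxv 0 (by omega) (by omega)]; congr 1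
      rw [e3, e4]
  -- split the appended sum
  have hsplit : (∑ t ∈ Finset.range (n+1), (dS S (X t) (X (t+1)) : ℝ)) =
      (∑ t ∈ Finset.range (i:ℕ), (dS S (X t) (X (t+1)) : ℝ))
      + (dS S (X (i:ℕ)) (X ((i:ℕ)+1)) : ℝ)
      + (∑ t ∈ Finset.Ico ((i:ℕ)+1) (n+1), (dS S (X t) (X (t+1)) : ℝ)) := by
    rw [Finset.range_eq_Ico,
      ← Finset.sum_Ico_consecutive _ (Nat.zero_le ((i:ℕ)+1)) (by omega : (i:ℕ)+1 ≤ n+1),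
      ← Finset.range_eq_Ico, Finset.sum_range_succ]
  -- bound the a-a part
  have hbound1 : (∑ t ∈ Finset.range (i:ℕ), (dS S (X t) (X (t+1)) : ℝ)) ≤ (i:ℕ) * R := by
    calc (∑ t ∈ Finset.range (i:ℕ), (dS S (X t) (X (t+1)) : ℝ))
        ≤ ∑ t ∈ Finset.range (i:ℕ), R := by
          refine Finset.sum_le_sum fun t ht => ?_
          rw [hXa t (by simp at ht; omega), hXa (t+1) (by simp at ht; omega),
            haxdef]
          exact hRa _ _
      _ = (i:ℕ) * R := by rw [Finset.sum_const, Finset.card_range, nsmul_eq_mul]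
  -- middle term
  have hmid : (dS S (X (i:ℕ)) (X ((i:ℕ)+1)) : ℝ) = (dS S w (gx (i:ℕ)) : ℝ) := by
    rw [hXa (i:ℕ) (le_refl _), hXg ((i:ℕ)+1) (le_refl _) (by omega), hw]
    simp
  -- g-g part
  have hgg : (∑ t ∈ Finset.Ico ((i:ℕ)+1) (n+1), (dS S (X t) (X (t+1)) : ℝ)) =
      ∑ t ∈ Finset.Ico (i:ℕ) n, (dS S (gx t) (gx (t+1)) : ℝ) := by
    rw [Finset.sum_Ico_eq_sum_range, Finset.sum_Ico_eq_sum_range]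
    refine Finset.sum_congr (by congr 1; omega) fun t ht => ?_
    simp only [Finset.mem_range] at ht
    rw [hXg ((i:ℕ)+1+t) (by omega) (by omega), hXg ((i:ℕ)+1+t+1) (by omega) (by omega)]
    rw [show (i:ℕ)+1+t-1 = (i:ℕ)+t from by omega, show (i:ℕ)+1+t+1-1 = (i:ℕ)+t+1 from by omega]
  -- last term
  have hlast : (dS S (X (n+1)) (v * X 0) : ℝ) ≤
      (dS S (gx n) (v * gx 0) : ℝ) + (dS S (gx 0) (ax 0) : ℝ) := by
    rw [hXg (n+1) (by omega) (by omega), hXa 0 (by omega),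
      show n+1-1 = n from by omega]
    refine (tri _ (v * gx 0) _).trans ?_
    have : dS S (v * gx 0) (v * ax 0) = dS S (gx 0) (ax 0) := dS_mulLeft _ _ _
    rw [this]
  -- geodesic estimates
  have hconn : (dS S (gx 0) (ax 0) : ℝ) + (dS S w (gx (i:ℕ)) : ℝ) ≤
      (∑ t ∈ Finset.range (i:ℕ), (dS S (gx t) (gx (t+1)) : ℝ)) + R + C₁₈ := by
    have t1 : (dS S (gx 0) (ax 0) : ℝ) ≤
        (dS S (gx 0) (gx p') : ℝ) + (dS S (gx p') w : ℝ) + R := by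
      refine (tri _ (gx p') _).trans ?_
      have t2 : (dS S (gx p') (ax 0) : ℝ) ≤ (dS S (gx p') w : ℝ) + (dS S w (ax 0) : ℝ) :=
        tri _ w _
      have t3 : (dS S w (ax 0) : ℝ) ≤ R := by
        rw [hwdef, haxdef]; exact hRa _ _
      linarith
    have t4 : (dS S w (gx (i:ℕ)) : ℝ) ≤ (dS S w (gx q') : ℝ) + (dS S (gx q') (gx (i:ℕ)) : ℝ) :=
      tri _ (gx q') _
    have t5 : (dS S (gx 0) (gx p') : ℝ) + (dS S (gx p') (gx q') : ℝ)
        + (dS S (gx q') (gx (i:ℕ)) : ℝ) ≤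
        ∑ t ∈ Finset.range (i:ℕ), (dS S (gx t) (gx (t+1)) : ℝ) := by
      have u1 := hpath 0 p' (Nat.zero_le _) (by omega)
      have u2 := hpath p' q' hpq (by omega)
      have u3 := hpath q' (i:ℕ) hqi (by omega)
      have hu : (∑ t ∈ Finset.Ico 0 p', (dS S (gx t) (gx (t+1)) : ℝ))
          + (∑ t ∈ Finset.Ico p' q', (dS S (gx t) (gx (t+1)) : ℝ))
          + (∑ t ∈ Finset.Ico q' (i:ℕ), (dS S (gx t) (gx (t+1)) : ℝ)) =
          ∑ t ∈ Finset.range (i:ℕ), (dS S (gx t) (gx (t+1)) : ℝ) := by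
        rw [Finset.sum_Ico_consecutive _ (Nat.zero_le p') hpq,
          Finset.sum_Ico_consecutive _ (Nat.zero_le q') hqi, Finset.range_eq_Ico]
      linarith
    linarith [hgeo2]
  -- split the original sum
  have hsplitg : (∑ t ∈ Finset.range n, (dS S (gx t) (gx (t+1)) : ℝ)) =
      (∑ t ∈ Finset.range (i:ℕ), (dS S (gx t) (gx (t+1)) : ℝ))
      + (∑ t ∈ Finset.Ico (i:ℕ) n, (dS S (gx t) (gx (t+1)) : ℝ)) := by
    rw [Finset.range_eq_Ico, ← Finset.sum_Ico_consecutive _ (Nat.zero_le (i:ℕ)) hin,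
      ← Finset.range_eq_Ico]
  rw [hT, hTg, hsplit, hgg, hmid]
  have : ((i:ℕ):ℝ) * R + R = ((i:ℕ)+1) * R := by ring
  linarith [hbound1, hlast, hconn]

end TwtAux
section IdAux
variable {Γ : Type} {m : ℕ}

set_option maxHeartbeats 1000000 in
lemma apT_id0 (g : Fin (m+2) → Γ) (a : Fin (0+1) → Γ) :
    delF 0 (apT (n := m+1) ⟨0, by omega⟩ g a) = g := by
  funext j
  obtain ⟨t, ht⟩ := j
  simp only [delF, apT, Fin.castSucc_mk, Fin.succ_mk, Fin.val_zero]
  split_ifs <;>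
    first
      | rfl
      | omega
      | (congr 1; apply Fin.ext; simp; omega)
      | (congr 1; apply Fin.ext; simp)
      | (exfalso; omega)

set_option maxHeartbeats 1000000 in
lemma apT_id1 (g : Fin (m+2) → Γ) (i₀ : Fin (m+1)) (k : ℕ) (hk : k ≤ (i₀:ℕ)+1)
    (a : Fin (((i₀.succ : Fin (m+2)):ℕ)+1) → Γ) :
    delF k (apT (n := m+1) i₀.succ g a) =
      apT (n := m) i₀ (fun j => g j.succ) (delF k a) := by
  funext j
  obtain ⟨t, ht⟩ := j
  simp only [delF, apT, Fin.castSucc_mk, Fin.succ_mk, Fin.val_succ]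
  split_ifs <;>
    first
      | rfl
      | omega
      | (congr 1; apply Fin.ext; simp; omega)
      | (congr 1; apply Fin.ext; simp)
      | (exfalso; omega)

set_option maxHeartbeats 1000000 in
lemma apT_id2 (g : Fin (m+2) → Γ) (i : Fin (m+2)) (h : (i:ℕ) < m+1)
    (a : Fin ((i:ℕ)+1) → Γ) :
    delF ((i:ℕ)+1) (apT (n := m+1) i g a) =
      apT (n := m) ⟨(i:ℕ), h⟩ (fun j => g j.succ) a := by
  funext j
  obtain ⟨t, ht⟩ := j
  simp only [delF, apT, Fin.castSucc_mk, Fin.succ_mk, Fin.val_succ]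
  split_ifs <;>
    first
      | rfl
      | omega
      | (congr 1; apply Fin.ext; simp; omega)
      | (congr 1; apply Fin.ext; simp)
      | (exfalso; omega)

set_option maxHeartbeats 1000000 in
lemma apT_id3 (g : Fin (m+2) → Γ) (i : Fin (m+2)) (h : (i:ℕ) < m+1) (k : ℕ)
    (hk1 : (i:ℕ)+2 ≤ k) (hk2 : k ≤ m+2) (a : Fin ((i:ℕ)+1) → Γ) :
    delF k (apT (n := m+1) i g a) =
      apT (n := m) ⟨(i:ℕ), h⟩ (delF (k-1) g) a := by
  funext j
  obtain ⟨t, ht⟩ := j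
  simp only [delF, apT, Fin.castSucc_mk, Fin.succ_mk, Fin.val_succ]
  split_ifs <;>
    first
      | rfl
      | omega
      | (congr 1; apply Fin.ext; simp; omega)
      | (congr 1; apply Fin.ext; simp)
      | (exfalso; omega)

set_option maxHeartbeats 1000000 in
lemma apT_idT (g : Fin (m+2) → Γ) (i : Fin (m+1)) (k : ℕ) (hk : k ≤ (i:ℕ))
    (a : Fin ((i:ℕ)+1) → Γ) :
    apT (n := m) i (fun j => g j.succ) a = apT (n := m) i (delF k g) a := by
  funext j
  obtain ⟨t, ht⟩ := j
  simp only [delF, apT, Fin.castSucc_mk, Fin.succ_mk, Fin.val_succ]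
  split_ifs <;>
    first
      | rfl
      | omega
      | (congr 1; apply Fin.ext; simp; omega)
      | (congr 1; apply Fin.ext; simp)
      | (exfalso; omega)

set_option maxHeartbeats 1000000 in
lemma front_id1 (g : Fin (m+2) → Γ) (i₀ : Fin (m+1)) (k : ℕ) (hk : k ≤ (i₀:ℕ)) :
    delF k (frontTuple (n := m+1) i₀.succ g) = frontTuple (n := m) i₀ (delF k g) := by
  funext j
  obtain ⟨t, ht⟩ := j
  simp only [delF, frontTuple, Fin.castSucc_mk, Fin.succ_mk, Fin.castLE_mk]

set_option maxHeartbeats 1000000 in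
lemma front_id2 (g : Fin (m+2) → Γ) (i₀ : Fin (m+1)) :
    delF ((i₀:ℕ)+1) (frontTuple (n := m+1) i₀.succ g) =
      frontTuple (n := m+1) i₀.castSucc g := by
  funext j
  obtain ⟨t, ht⟩ := j
  have ht' : t < (i₀:ℕ)+1 := by simp at ht; omega
  simp only [delF, frontTuple, Fin.castSucc_mk, Fin.succ_mk, Fin.castLE_mk]
  rw [if_pos ht']

set_option maxHeartbeats 1000000 in
lemma front_id3 (g : Fin (m+2) → Γ) (i : Fin (m+2)) (h : (i:ℕ) < m+1) (k : ℕ)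
    (hk : (i:ℕ)+1 ≤ k) :
    frontTuple (n := m) (⟨(i:ℕ), h⟩ : Fin (m+1)) (delF k g) = frontTuple (n := m+1) i g := by
  funext j
  obtain ⟨t, ht⟩ := j
  have ht' : t < k := by simp at ht; omega
  simp only [delF, frontTuple, Fin.castSucc_mk, Fin.succ_mk, Fin.castLE_mk]
  rw [if_pos ht']

end IdAux
section HomotopyAux
variable {Γ : Type} [Group Γ]

lemma barD_eq_delF (p : ℕ) (c : BarC Γ (p+1)) :
    barD Γ p c = ∑ k ∈ Finset.range (p+2),
      ((-1:ℂ)^k) • Finsupp.mapDomain (fun x : Fin (p+2) → Γ => delF k x) c := by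
  conv_lhs => rw [← Finsupp.mapDomain_id (v := c)]
  rw [show (id : (Fin (p+2) → Γ) → (Fin (p+2) → Γ)) = fun x => x from rfl]
  rw [barD_mapDomain p (fun x => x) c]
  rw [← Fin.sum_univ_eq_sum_range (fun k =>
      ((-1:ℂ)^k) • Finsupp.mapDomain (fun x : Fin (p+2) → Γ => delF k x) c) (p+2)]
  refine Finset.sum_congr rfl fun k _ => ?_
  have hfun : (fun a : Fin (p+2) → Γ => a ∘ k.succAbove) = (fun x => delF (k:ℕ) x) :=
    funext fun x => comp_succAbove_eq_delF k x
  rw [hfun]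

lemma smul_smul_pow {M : Type*} [AddCommMonoid M] [Module ℂ M] (a b c : ℕ) (h : a + b = c)
    (x : M) : (-1:ℂ)^a • (-1:ℂ)^b • x = (-1:ℂ)^c • x := by
  rw [smul_smul, ← pow_add, h]

lemma smul_neg_pow {M : Type*} [AddCommGroup M] [Module ℂ M] (a : ℕ) (x : M) :
    (-1:ℂ)^a • x = -((-1:ℂ)^(a+1) • x) := by
  rw [pow_succ, mul_smul]
  simp

/-- The chains `Θ'_i[g₀,…,g_i]`. -/
def Achain (Θ' : ∀ n, BarC Γ n →ₗ[ℂ] BarC Γ n) {m : ℕ} (g : Fin (m+2) → Γ)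
    (i : Fin (m+2)) : BarC Γ (i:ℕ) :=
  Θ' (i:ℕ) (Finsupp.single (frontTuple i g) 1)

/-- The summands of `∂∘∇̃` on a basis element. -/
def MDn (Θ' : ∀ n, BarC Γ n →ₗ[ℂ] BarC Γ n) {m : ℕ} (g : Fin (m+2) → Γ) (v : Γ)
    (i k : ℕ) : TBar Γ (m+1) :=
  if h : i < m+2 then
    Finsupp.mapDomain (fun a => (delF k (apT (⟨i,h⟩ : Fin (m+2)) g a), v))
      (Achain Θ' g ⟨i,h⟩)
  else 0

/-- The summands of `∇̃∘∂` on a basis element. -/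
def Ubn (Θ' : ∀ n, BarC Γ n →ₗ[ℂ] BarC Γ n) {m : ℕ} (g : Fin (m+2) → Γ) (v : Γ)
    (i k : ℕ) : TBar Γ (m+1) :=
  if h : i < m+1 then
    Finsupp.mapDomain (fun a => (apT (n:=m) (⟨i,h⟩ : Fin (m+1)) (delF k g) a, v))
      (Θ' i (Finsupp.single (frontTuple (n:=m) (⟨i,h⟩ : Fin (m+1)) (delF k g)) 1))
  else 0

/-- The boundary terms `[Θ'[g₀,…,g_i], g_{i+1},…;v]`. -/
def Btn (Θ' : ∀ n, BarC Γ n →ₗ[ℂ] BarC Γ n) {m : ℕ} (g : Fin (m+2) → Γ) (v : Γ)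
    (i : ℕ) : TBar Γ (m+1) :=
  if h : i < m+1 then
    Finsupp.mapDomain (fun a => (apT (n:=m) (⟨i,h⟩ : Fin (m+1)) (fun j => g j.succ) a, v))
      (Achain Θ' g ⟨i, by omega⟩)
  else 0

variable (Θ' : ∀ n, BarC Γ n →ₗ[ℂ] BarC Γ n) {m : ℕ} (g : Fin (m+2) → Γ) (v : Γ)

lemma MDn_eq (i : Fin (m+2)) (k : ℕ) :
    MDn Θ' g v (i:ℕ) k =
      Finsupp.mapDomain (fun a => (delF k (apT i g a), v)) (Achain Θ' g i) := by
  rw [MDn, dif_pos i.isLt]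

lemma Ubn_eq (i : Fin (m+1)) (k : ℕ) :
    Ubn Θ' g v (i:ℕ) k =
      Finsupp.mapDomain (fun a => (apT (n:=m) i (delF k g) a, v))
        (Θ' (i:ℕ) (Finsupp.single (frontTuple (n:=m) i (delF k g)) 1)) := by
  rw [Ubn, dif_pos i.isLt]

lemma Btn_top : Btn Θ' g v (m+1) = 0 := by
  rw [Btn, dif_neg (by omega)]

lemma MDn_zero (h0 : Θ' 0 = LinearMap.id) :
    MDn Θ' g v 0 0 = Finsupp.single (g, v) 1 := by
  rw [MDn, dif_pos (by omega : 0 < m+2)]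
  have hA : Achain Θ' g ⟨0, by omega⟩ = Finsupp.single (frontTuple (⟨0, by omega⟩ : Fin (m+2)) g) 1 := by
    rw [Achain, h0]; rfl
  rw [hA, Finsupp.mapDomain_single, apT_id0 g (frontTuple (⟨0, by omega⟩ : Fin (m+2)) g)]

lemma MDn_B (htop : Θ' (m+1) = 0) (i : ℕ) (hi : i ≤ m+1) :
    MDn Θ' g v i (i+1) = Btn Θ' g v i := by
  rcases Nat.lt_or_ge i (m+1) with h | h
  · rw [MDn, dif_pos (by omega), Btn, dif_pos h]
    congr 1
    funext a
    rw [apT_id2 g ⟨i, by omega⟩ (by simpa using h) a]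
  · have hi' : i = m+1 := by omega
    subst hi'
    rw [MDn, dif_pos (by omega), Btn, dif_neg (by omega)]
    have hA : Achain Θ' g ⟨m+1, by omega⟩ = 0 := by
      rw [Achain]
      show Θ' (m+1) _ = 0
      rw [htop]
      rfl
    rw [hA, Finsupp.mapDomain_zero]

lemma MDn_C (i k : ℕ) (hk1 : i+2 ≤ k) (hk2 : k ≤ m+2) :
    MDn Θ' g v i k = Ubn Θ' g v i (k-1) := by
  have hi : i < m+1 := by omega
  rw [MDn, dif_pos (by omega), Ubn, dif_pos hi]
  have hmap : (fun a => (delF k (apT (⟨i, by omega⟩ : Fin (m+2)) g a), v)) =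
      (fun a => (apT (n:=m) (⟨i, hi⟩ : Fin (m+1)) (delF (k-1) g) a, v)) := by
    funext a
    rw [apT_id3 g ⟨i, by omega⟩ (by simpa using hi) k (by simpa using hk1) hk2 a]
  rw [hmap]
  congr 2
  rw [Achain]
  congr 1
  rw [front_id3 g ⟨i, by omega⟩ (by simpa using hi) (k-1) (by simp; omega)]

end HomotopyAux
section HomotopyKey
variable {Γ : Type} [Group Γ]
variable (Θ' : ∀ n, BarC Γ n →ₗ[ℂ] BarC Γ n) {m : ℕ} (g : Fin (m+2) → Γ) (v : Γ)

set_option maxHeartbeats 1000000 in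
lemma MDn_P (hcm : ∀ n, (barD Γ n).comp (Θ' (n+1)) = (Θ' n).comp (barD Γ n))
    (i : ℕ) (hi : i ≤ m) :
    ∑ k ∈ Finset.range (i+2), ((-1:ℂ)^k) • MDn Θ' g v (i+1) k =
      (∑ k ∈ Finset.range (i+1), ((-1:ℂ)^k) • Ubn Θ' g v i k)
      + ((-1:ℂ)^(i+1)) • Btn Θ' g v i := by
  have hi1 : i < m+1 := by omega
  set i₀ : Fin (m+1) := ⟨i, hi1⟩ with hi₀
  set Fam : (Fin (i+1) → Γ) → ((Fin (m+2) → Γ) × Γ) :=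
    fun b => (apT (n:=m) i₀ (fun j => g j.succ) b, v) with hFam
  set A : BarC Γ (i+1) := Achain Θ' g i₀.succ with hA
  set L : BarC Γ i →ₗ[ℂ] TBar Γ (m+1) := Finsupp.lmapDomain ℂ ℂ Fam with hL
  -- step 1
  have h1 : ∀ k, k ≤ i+1 → MDn Θ' g v (i+1) k =
      Finsupp.mapDomain Fam (Finsupp.mapDomain (fun a => delF k a) A) := by
    intro k hk
    rw [MDn, dif_pos (by omega : i+1 < m+2)]
    have hfun : (fun a => (delF k (apT (⟨i+1, by omega⟩ : Fin (m+2)) g a), v)) =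
        Fam ∘ (fun a : Fin (i+2) → Γ => delF k a) := by
      funext a
      exact congrArg (fun z => (z, v)) (apT_id1 g i₀ k (by simpa [hi₀] using hk) a)
    rw [hfun, Finsupp.mapDomain_comp]
    rfl
  -- step 2: assemble into L applied to a boundary
  have h2 : ∑ k ∈ Finset.range (i+2), ((-1:ℂ)^k) • MDn Θ' g v (i+1) k =
      L (∑ k ∈ Finset.range (i+2), ((-1:ℂ)^k) •
        Finsupp.mapDomain (fun a : Fin (i+2) → Γ => delF k a) A) := by
    rw [map_sum]
    refine Finset.sum_congr rfl fun k hk => ?_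
    rw [h1 k (by simp at hk; omega), map_smul]
    rfl
  rw [h2, ← barD_eq_delF i A]
  -- step 3: chain map
  have h3 : barD Γ i A = Θ' i (barD Γ i (Finsupp.single (frontTuple i₀.succ g) 1)) := by
    rw [hA]
    exact LinearMap.congr_fun (hcm i) (Finsupp.single (frontTuple i₀.succ g) 1)
  rw [h3, barD_eq_delF]
  -- step 4: push through Θ' i and L
  rw [map_sum, map_sum]
  have h4 : ∀ k ∈ Finset.range (i+2),
      L (Θ' i (((-1:ℂ)^k) • Finsupp.mapDomain (fun x : Fin (i+2) → Γ => delF k x)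
        (Finsupp.single (frontTuple i₀.succ g) 1))) =
      ((-1:ℂ)^k) • Finsupp.mapDomain Fam
        (Θ' i (Finsupp.single (delF k (frontTuple i₀.succ g)) 1)) := by
    intro k _
    rw [Finsupp.mapDomain_single, map_smul, map_smul]
    rfl
  rw [Finset.sum_congr rfl h4]
  -- step 5: split the top face
  rw [Finset.sum_range_succ]
  congr 1
  · -- lower faces give the Ubn terms
    refine Finset.sum_congr rfl fun k hk => ?_
    have hk' : k ≤ i := by simp at hk; omega
    congr 1
    rw [front_id1 g i₀ k (by simpa [hi₀] using hk')]
    have hmap : Fam = (fun a => (apT (n:=m) i₀ (delF k g) a, v)) := by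
      funext a
      exact congrArg (fun z => (z, v)) (apT_idT g i₀ k (by simpa [hi₀] using hk') a)
    rw [hmap, Ubn, dif_pos hi1]
  · -- top face gives the boundary term
    congr 1
    rw [front_id2 g i₀]
    rw [Btn, dif_pos hi1]
    rfl

end HomotopyKey
section HomotopyMain
variable {Γ : Type} [Group Γ]
variable (Θ' : ∀ n, BarC Γ n →ₗ[ℂ] BarC Γ n) {m : ℕ} (g : Fin (m+2) → Γ) (v : Γ)

/-- Total face sums. -/
def Tnn (i : ℕ) : TBar Γ (m+1) :=
  ∑ k ∈ Finset.range (m+3), ((-1:ℂ)^k) • MDn Θ' g v i k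

def Cpn (i : ℕ) : TBar Γ (m+1) :=
  ∑ k ∈ Finset.Ico (i+1) (m+2), ((-1:ℂ)^(i+k+1)) • Ubn Θ' g v i k

def Ppn (i : ℕ) : TBar Γ (m+1) :=
  ∑ k ∈ Finset.range (i+1), ((-1:ℂ)^(i+k+1)) • Ubn Θ' g v i k

def Wnn (i : ℕ) : TBar Γ (m+1) :=
  ∑ k ∈ Finset.range (m+2), ((-1:ℂ)^(i+k+1)) • Ubn Θ' g v i k

lemma Ppn_add_Cpn (i : ℕ) (hi : i ≤ m) :
    Ppn Θ' g v i + Cpn Θ' g v i = Wnn Θ' g v i := by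
  rw [Ppn, Cpn, Wnn, Finset.range_eq_Ico, Finset.range_eq_Ico]
  exact Finset.sum_Ico_consecutive (fun k => ((-1:ℂ)^(i+k+1)) • Ubn Θ' g v i k) (Nat.zero_le (i+1)) (by omega : i+1 ≤ m+2)

lemma Cpn_top : Cpn Θ' g v (m+1) = 0 := by
  rw [Cpn, Finset.Ico_eq_empty (by omega), Finset.sum_empty]

lemma hCCs (i : ℕ) (hi : i ≤ m+1) :
    ∑ k ∈ Finset.Ico (i+2) (m+3), ((-1:ℂ)^k) • MDn Θ' g v i k =
      ∑ k ∈ Finset.Ico (i+1) (m+2), ((-1:ℂ)^(k+1)) • Ubn Θ' g v i k := by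
  rw [Finset.sum_Ico_eq_sum_range, Finset.sum_Ico_eq_sum_range]
  refine Finset.sum_congr (by congr 1; omega) fun t ht => ?_
  simp only [Finset.mem_range] at ht
  rw [MDn_C Θ' g v (i) (i+2+t) (by omega) (by omega)]
  rw [show i+2+t-1 = i+1+t from by omega]
  congr 2
  omega

lemma hT0 (h0 : Θ' 0 = LinearMap.id) (htop : Θ' (m+1) = 0) :
    Tnn Θ' g v 0 = Finsupp.single (g, v) 1 - Btn Θ' g v 0 + Cpn Θ' g v 0 := by
  rw [Tnn, Finset.range_eq_Ico,
    ← Finset.sum_Ico_consecutive _ (Nat.zero_le 2) (by omega : 2 ≤ m+3),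
    ← Finset.range_eq_Ico, Finset.sum_range_succ, Finset.sum_range_one]
  have e0 : ((-1:ℂ)^(0:ℕ)) • MDn Θ' g v 0 0 = Finsupp.single (g, v) 1 := by
    rw [pow_zero, one_smul, MDn_zero Θ' g v h0]
  have e1 : ((-1:ℂ)^(1:ℕ)) • MDn Θ' g v 0 1 = - Btn Θ' g v 0 := by
    have h := MDn_B Θ' g v htop 0 (by omega)
    norm_num at h
    rw [h, pow_one, neg_one_smul]
  have e2 : ∑ k ∈ Finset.Ico 2 (m+3), ((-1:ℂ)^k) • MDn Θ' g v 0 k = Cpn Θ' g v 0 := by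
    have h := hCCs Θ' g v 0 (by omega)
    rw [show (0+2 : ℕ) = 2 from rfl, show (0+1 : ℕ) = 1 from rfl] at h
    rw [h, Cpn]
    refine Finset.sum_congr (by norm_num) fun k _ => ?_
    congr 2
    omega
  rw [e0, e1, e2]
  abel

lemma hTS (hcm : ∀ n, (barD Γ n).comp (Θ' (n+1)) = (Θ' n).comp (barD Γ n))
    (htop : Θ' (m+1) = 0) (i : ℕ) (hi : i ≤ m) :
    ((-1:ℂ)^(i+1)) • Tnn Θ' g v (i+1) =
      Ppn Θ' g v i + Btn Θ' g v i - Btn Θ' g v (i+1) + Cpn Θ' g v (i+1) := by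
  have hsplit : Tnn Θ' g v (i+1) =
      ((∑ k ∈ Finset.range (i+2), ((-1:ℂ)^k) • MDn Θ' g v (i+1) k)
      + ((-1:ℂ)^(i+2)) • MDn Θ' g v (i+1) (i+2))
      + ∑ k ∈ Finset.Ico (i+3) (m+3), ((-1:ℂ)^k) • MDn Θ' g v (i+1) k := by
    rw [Tnn, Finset.range_eq_Ico,
      ← Finset.sum_Ico_consecutive _ (Nat.zero_le (i+3)) (by omega : i+3 ≤ m+3),
      ← Finset.range_eq_Ico, Finset.sum_range_succ]
  rw [hsplit, MDn_P Θ' g v hcm i hi]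
  have eB : MDn Θ' g v (i+1) (i+2) = Btn Θ' g v (i+1) := by
    have h := MDn_B Θ' g v htop (i+1) (by omega)
    rw [show i+1+1 = i+2 from rfl] at h
    exact h
  have eC : ∑ k ∈ Finset.Ico (i+3) (m+3), ((-1:ℂ)^k) • MDn Θ' g v (i+1) k =
      ∑ k ∈ Finset.Ico (i+2) (m+2), ((-1:ℂ)^(k+1)) • Ubn Θ' g v (i+1) k := by
    have h := hCCs Θ' g v (i+1) (by omega)
    rw [show i+1+2 = i+3 from rfl, show i+1+1 = i+2 from rfl] at h
    exact h
  rw [eB, eC, smul_add, smul_add, smul_add]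
  have p11 : ((-1:ℂ)^(i+1)) • ∑ k ∈ Finset.range (i+1), ((-1:ℂ)^k) • Ubn Θ' g v i k =
      Ppn Θ' g v i := by
    rw [Finset.smul_sum, Ppn]
    exact Finset.sum_congr rfl fun k _ => smul_smul_pow _ _ _ (by omega) _
  have p12 : ((-1:ℂ)^(i+1)) • ((-1:ℂ)^(i+1)) • Btn Θ' g v i = Btn Θ' g v i := by
    rw [smul_smul, ← pow_add, Even.neg_one_pow ⟨i+1, by omega⟩, one_smul]
  have p2 : ((-1:ℂ)^(i+1)) • ((-1:ℂ)^(i+2)) • Btn Θ' g v (i+1) = - Btn Θ' g v (i+1) := by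
    rw [smul_smul, ← pow_add, Odd.neg_one_pow ⟨i+1, by omega⟩, neg_one_smul]
  have p3 : ((-1:ℂ)^(i+1)) • ∑ k ∈ Finset.Ico (i+2) (m+2), ((-1:ℂ)^(k+1)) • Ubn Θ' g v (i+1) k =
      Cpn Θ' g v (i+1) := by
    rw [Finset.smul_sum, Cpn]
    exact Finset.sum_congr rfl fun k _ => smul_smul_pow _ _ _ (by omega) _
  rw [p11, p12, p2, p3]
  abel


end HomotopyMain
section HomotopyMain2
variable {Γ : Type} [Group Γ]
variable (Θ' : ∀ n, BarC Γ n →ₗ[ℂ] BarC Γ n) {m : ℕ} (g : Fin (m+2) → Γ) (v : Γ)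

lemma nabla_H1 (hcm : ∀ n, (barD Γ n).comp (Θ' (n+1)) = (Θ' n).comp (barD Γ n))
    (h0 : Θ' 0 = LinearMap.id) (htop : Θ' (m+1) = 0) :
    tbarD Γ (m+1) (nablaT Θ' (m+1) (Finsupp.single (g, v) 1)) =
      Finsupp.single (g, v) 1 + ∑ i ∈ Finset.range (m+1), Wnn Θ' g v i := by
  rw [nablaT_single, map_sum]
  have hterm : ∀ i : Fin (m+2),
      tbarD Γ (m+1) (((-1:ℂ)^(i:ℕ)) •
        Finsupp.mapDomain (fun a => (apT i g a, v))
          (Θ' (i:ℕ) (Finsupp.single (frontTuple i g) 1))) =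
      ((-1:ℂ)^(i:ℕ)) • Tnn Θ' g v (i:ℕ) := by
    intro i
    rw [map_smul, tbarD_mapDomain (m+1) (fun a => apT i g a) v]
    congr 1
    rw [Tnn, ← Fin.sum_univ_eq_sum_range (fun k => ((-1:ℂ)^k) • MDn Θ' g v (i:ℕ) k) (m+3)]
    refine Finset.sum_congr rfl fun k _ => ?_
    congr 1
    rw [MDn_eq Θ' g v i k, Achain]
    congr 1
    funext a
    rw [comp_succAbove_eq_delF]
  rw [Finset.sum_congr rfl fun i _ => hterm i]
  rw [Fin.sum_univ_eq_sum_range (fun i => ((-1:ℂ)^i) • Tnn Θ' g v i) (m+2)]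
  rw [Finset.sum_range_succ']
  rw [pow_zero, one_smul, hT0 Θ' g v h0 htop]
  rw [Finset.sum_congr rfl fun i hi => hTS Θ' g v hcm htop i (by simp at hi; omega)]
  have hsum1 : ∑ i ∈ Finset.range (m+1),
      (Ppn Θ' g v i + Btn Θ' g v i - Btn Θ' g v (i+1) + Cpn Θ' g v (i+1)) =
      (∑ i ∈ Finset.range (m+1), Ppn Θ' g v i)
      + (∑ i ∈ Finset.range (m+1), (Btn Θ' g v i - Btn Θ' g v (i+1)))
      + ∑ i ∈ Finset.range (m+1), Cpn Θ' g v (i+1) := by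
    rw [← Finset.sum_add_distrib, ← Finset.sum_add_distrib]
    refine Finset.sum_congr rfl fun i _ => ?_
    abel
  rw [hsum1, Finset.sum_range_sub' (fun i => Btn Θ' g v i) (m+1)]
  have hsum2 : ∑ i ∈ Finset.range (m+1), Cpn Θ' g v (i+1) =
      (∑ i ∈ Finset.range (m+1), Cpn Θ' g v i) + Cpn Θ' g v (m+1) - Cpn Θ' g v 0 := by
    have := Finset.sum_range_succ' (fun i => Cpn Θ' g v i) (m+1)
    have h2 := Finset.sum_range_succ (fun i => Cpn Θ' g v i) (m+1)
    rw [h2] at this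
    -- this : ∑_{range (m+1)} Cpn + Cpn (m+1) = ∑_{range (m+1)} Cpn (i+1) + Cpn 0
    linear_combination (norm := abel) this.symm
  rw [hsum2, Btn_top, Cpn_top]
  have hsum3 : (∑ i ∈ Finset.range (m+1), Ppn Θ' g v i)
      + (∑ i ∈ Finset.range (m+1), Cpn Θ' g v i) =
      ∑ i ∈ Finset.range (m+1), Wnn Θ' g v i := by
    rw [← Finset.sum_add_distrib]
    exact Finset.sum_congr rfl fun i hi => Ppn_add_Cpn Θ' g v i (by simp at hi; omega)
  linear_combination (norm := abel) hsum3


end HomotopyMain2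
section HomotopyMain3
variable {Γ : Type} [Group Γ]
variable (Θ' : ∀ n, BarC Γ n →ₗ[ℂ] BarC Γ n) {m : ℕ} (g : Fin (m+2) → Γ) (v : Γ)

lemma nabla_H2 :
    nablaT Θ' m (tbarD Γ m (Finsupp.single (g, v) 1)) =
      - ∑ i ∈ Finset.range (m+1), Wnn Θ' g v i := by
  rw [tbarD_single m g v 1, map_sum]
  have hterm : ∀ k : Fin (m+2),
      nablaT Θ' m (((-1:ℂ)^(k:ℕ)) • Finsupp.single (g ∘ k.succAbove, v) 1) =
      ((-1:ℂ)^(k:ℕ)) • ∑ i ∈ Finset.range (m+1), ((-1:ℂ)^i) • Ubn Θ' g v i (k:ℕ) := by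
    intro k
    rw [map_smul]
    congr 1
    rw [show g ∘ k.succAbove = delF (k:ℕ) g from comp_succAbove_eq_delF k g]
    rw [nablaT_single Θ' m (delF (k:ℕ) g) v]
    rw [← Fin.sum_univ_eq_sum_range (fun i => ((-1:ℂ)^i) • Ubn Θ' g v i (k:ℕ)) (m+1)]
    refine Finset.sum_congr rfl fun i _ => ?_
    congr 1
    exact (Ubn_eq Θ' g v i (k:ℕ)).symm
  rw [Finset.sum_congr rfl fun k _ => hterm k]
  rw [Fin.sum_univ_eq_sum_range
    (fun k => ((-1:ℂ)^k) • ∑ i ∈ Finset.range (m+1), ((-1:ℂ)^i) • Ubn Θ' g v i k) (m+2)]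
  simp only [Finset.smul_sum]
  rw [Finset.sum_comm]
  rw [← Finset.sum_neg_distrib]
  refine Finset.sum_congr rfl fun i _ => ?_
  rw [Wnn, ← Finset.sum_neg_distrib]
  refine Finset.sum_congr rfl fun k _ => ?_
  rw [smul_smul_pow k i (i+k) (by omega), smul_neg_pow (i+k)]

lemma homotopy_key (hcm : ∀ n, (barD Γ n).comp (Θ' (n+1)) = (Θ' n).comp (barD Γ n))
    (h0 : Θ' 0 = LinearMap.id) (htop : Θ' (m+1) = 0) :
    tbarD Γ (m+1) (nablaT Θ' (m+1) (Finsupp.single (g, v) 1))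
      + nablaT Θ' m (tbarD Γ m (Finsupp.single (g, v) 1)) = Finsupp.single (g, v) 1 := by
  rw [nabla_H1 Θ' g v hcm h0 htop, nabla_H2 Θ' g v]
  abel

end HomotopyMain3
/-- given a controlled Γ-equivariant retraction `Θ'` of the Bar complex
onto a Rips complex (as produced in Statement 15), the operator
`∇̃[g₀,…,gₙ;v] = Σᵢ(−1)^i[Θ'([g₀,…,g_i]), g_i,…,gₙ;v]` of the twisted Bar complex:
(i) is a contracting homotopy in degrees ≥ d; (ii) increases weights by at most an
additive constant; (iii) has `ℓ¹`-norm controlled linearly by partial weights. -/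
theorem nabla_properties {Γ : Type} [Group Γ] (S : Set Γ) (δ : ℝ) (hδ : 0 ≤ δ)
    (hS : IsHypGroup S δ) (R : ℝ) (hR : 0 < R) (d : ℕ) (C₁₈ C₁₉ : ℝ)
    (hC₁₈ : 0 ≤ C₁₈) (hC₁₉ : 0 ≤ C₁₉)
    (Θ' : ∀ n, BarC Γ n →ₗ[ℂ] BarC Γ n)
    (hcm : ∀ n, (barD Γ n).comp (Θ' (n+1)) = (Θ' n).comp (barD Γ n))
    (heq : ∀ (g : Γ) (n : ℕ), (Θ' n).comp (actB g n) = (actB g n).comp (Θ' n))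
    (h0 : Θ' 0 = LinearMap.id)
    (hd : ∀ n, d ≤ n → Θ' n = 0)
    (hrips : ∀ (n : ℕ) (c : BarC Γ n), InRips S R (Θ' n c))
    (hsupp : ∀ (n : ℕ) (t : Fin (n+1) → Γ),
      chainSupp (Θ' n (Finsupp.single t 1)) ⊆ geodN S C₁₈ (Set.range t))
    (hnorm : ∀ (n : ℕ) (t : Fin (n+1) → Γ),
      l1norm (Θ' n (Finsupp.single t 1)) ≤ C₁₉ * ((tupDiam S t : ℝ) + 1)) :
    -- (i) contracting homotopy in degrees ≥ d
    (∀ m : ℕ, d ≤ m + 1 →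
      (tbarD Γ (m+1)).comp (nablaT Θ' (m+1)) + (nablaT Θ' m).comp (tbarD Γ m) =
        LinearMap.id) ∧
    -- (ii) weight control
    (∃ C₂₀ : ℝ, 0 ≤ C₂₀ ∧
      ∀ (n : ℕ) (g : Fin (n+1) → Γ) (v : Γ),
        ∀ y ∈ (nablaT Θ' n (Finsupp.single (g, v) 1)).support,
          (twt S y.2 y.1 : ℝ) ≤ (twt S v g : ℝ) + C₂₀) ∧
    -- (iii) ℓ¹-norm control
    (∃ C₂₁ : ℝ, 0 ≤ C₂₁ ∧
      ∀ (n : ℕ) (g : Fin (n+1) → Γ) (v : Γ),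
        l1T (nablaT Θ' n (Finsupp.single (g, v) 1)) ≤
          C₂₁ * (1 + ∑ j : Fin (min n d),
            (dS S (g ⟨(j:ℕ), by have := j.isLt; omega⟩)
                  (g ⟨(j:ℕ)+1, by have := j.isLt; omega⟩) : ℝ))) := by
  
  obtain ⟨hSfin, hsym, hgen, hhyp⟩ := hS
  refine ⟨?_, ⟨d * R + C₁₈, by positivity, ?_⟩, ⟨d * C₁₉, by positivity, ?_⟩⟩
  · -- (i) contracting homotopy
    intro m hm
    refine Finsupp.lhom_ext fun gv b => ?_
    obtain ⟨g, v⟩ := gv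
    have key := homotopy_key Θ' g v hcm h0 (hd (m+1) hm)
    have hb : Finsupp.single (g, v) b = b • Finsupp.single (g, v) 1 := by
      rw [Finsupp.smul_single, smul_eq_mul, mul_one]
    simp only [LinearMap.add_apply, LinearMap.comp_apply, LinearMap.id_apply]
    rw [hb, map_smul, map_smul, map_smul, map_smul, ← smul_add, key]
  ·
    intro n g v y hy
    classical
    rw [nablaT_single] at hy
    obtain ⟨i, _, hy2⟩ := Finsupp.mem_support_finset_sum y hy
    have hy3 : y ∈ (Finsupp.mapDomain (fun a => (apT i g a, v))
        (Θ' (i:ℕ) (Finsupp.single (frontTuple i g) 1))).support :=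
      Finsupp.support_smul hy2
    have hy4 := Finsupp.mapDomain_support hy3
    obtain ⟨a, ha, rfl⟩ := Finset.mem_image.1 hy4
    have hid : (i:ℕ) < d := by
      by_contra hcon
      rw [hd (i:ℕ) (by omega)] at ha
      simp at ha
    have hRa : ∀ j j' : Fin ((i:ℕ)+1), (dS S (a j) (a j') : ℝ) ≤ R :=
      fun j j' => hrips (i:ℕ) (Finsupp.single (frontTuple i g) 1) a ha j j'
    have hgeo : a (Fin.last (i:ℕ)) ∈ geodN S C₁₈ (Set.range (frontTuple i g)) :=
      hsupp (i:ℕ) (frontTuple i g) ⟨a, ha, Fin.last _, rfl⟩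
    have hb := twt_bound hsym hgen i g v a (le_of_lt hR) hC₁₈ hRa hgeo
    have hiR : ((i:ℕ)+1 : ℝ) * R ≤ (d:ℝ) * R := by
      have : ((i:ℕ)+1 : ℝ) ≤ (d:ℝ) := by exact_mod_cast hid
      nlinarith
    calc (twt S (apT i g a, v).2 (apT i g a, v).1 : ℝ) ≤
        (twt S v g : ℝ) + ((i:ℕ)+1) * R + C₁₈ := hb
      _ ≤ (twt S v g : ℝ) + (↑d * R + C₁₈) := by linarith
  ·
    intro n g v
    set gx : ℕ → Γ := fun t => g ⟨min t n, by omega⟩ with hgx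
    -- rewrite the target sum via gx
    have hgval : ∀ (t : ℕ) (h : t < n+1), t ≤ n → g ⟨t, h⟩ = gx t := by
      intro t h ht
      simp only [hgx]
      congr 1
      apply Fin.ext
      simp
      omega
    have hsum_eq : ∀ j : Fin (min n d),
        (dS S (g ⟨(j:ℕ), by have := j.isLt; omega⟩)
            (g ⟨(j:ℕ)+1, by have := j.isLt; omega⟩) : ℝ) = (dS S (gx j) (gx (j+1)) : ℝ) := by
      intro j
      have hj := j.isLt
      have hj1 : (j:ℕ) < n := by omega
      rw [hgval (j:ℕ) (by omega) (by omega), hgval ((j:ℕ)+1) (by omega) (by omega)]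
    set Sd : ℝ := ∑ j : Fin (min n d), (dS S (gx j) (gx (j+1)) : ℝ) with hSd
    have hSd_nonneg : 0 ≤ Sd := Finset.sum_nonneg fun _ _ => by positivity
    have hSdN : Sd = ((∑ j ∈ Finset.range (min n d), dS S (gx j) (gx (j+1)) : ℕ) : ℝ) := by
      rw [Nat.cast_sum, hSd, Fin.sum_univ_eq_sum_range (fun j => (dS S (gx j) (gx (j+1)) : ℝ))]
    have hB : (0:ℝ) ≤ C₁₉ * (1 + Sd) := by positivity
    -- bound each term
    have hterm : ∀ i : Fin (n+1),
        l1F (((-1:ℂ)^(i:ℕ)) • Finsupp.mapDomain (fun a => (apT i g a, v))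
          (Θ' (i:ℕ) (Finsupp.single (frontTuple i g) 1)))
        ≤ if (i:ℕ) < d then C₁₉ * (1 + Sd) else 0 := by
      intro i
      rw [l1F_smul]
      simp only [norm_pow, norm_neg, norm_one, one_pow, one_mul]
      by_cases hid : (i:ℕ) < d
      · rw [if_pos hid]
        refine (l1F_mapDomain_le _ _).trans ?_
        refine (hnorm (i:ℕ) (frontTuple i g)).trans ?_
        have hdiam : ((tupDiam S (frontTuple i g) : ℕ) : ℝ) ≤ Sd := by
          rw [hSdN]
          refine Nat.cast_le.2 ?_
          refine Finset.sup_le fun p _ => ?_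
          have h1 : frontTuple i g p.1 = gx (p.1 : ℕ) := by
            show g _ = gx _
            rw [← hgval (p.1:ℕ) (by have := p.1.isLt; have := i.isLt; omega)
              (by have := p.1.isLt; have := i.isLt; omega)]
            congr 1
          have h2 : frontTuple i g p.2 = gx (p.2 : ℕ) := by
            show g _ = gx _
            rw [← hgval (p.2:ℕ) (by have := p.2.isLt; have := i.isLt; omega)
              (by have := p.2.isLt; have := i.isLt; omega)]
            congr 1
          rw [h1, h2]
          refine dS_le_range_sum hsym hgen gx ?_ ?_
          · have := p.1.isLt; have := i.isLt; omega
          · have := p.2.isLt; have := i.isLt; omega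
        nlinarith [hSd_nonneg]
      · rw [if_neg hid, hd (i:ℕ) (by omega)]
        simp [l1F_zero]
    -- assemble
    have hmain : l1T (nablaT Θ' n (Finsupp.single (g, v) 1)) ≤
        ∑ i : Fin (n+1), if (i:ℕ) < d then C₁₉ * (1 + Sd) else 0 := by
      show l1F _ ≤ _
      rw [nablaT_single]
      exact (l1F_finsetSum_le _ _).trans (Finset.sum_le_sum fun i _ => hterm i)
    refine hmain.trans ?_
    have hcard : (Finset.univ.filter fun i : Fin (n+1) => (i:ℕ) < d).card ≤ d := by
      have : (Finset.univ.filter fun i : Fin (n+1) => (i:ℕ) < d).card ≤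
          (Finset.range d).card := by
        refine Finset.card_le_card_of_injOn (fun i => (i:ℕ)) ?_ ?_
        · intro i hi; simp at hi ⊢; omega
        · intro i _ j _ hij; exact Fin.ext hij
      simpa using this
    rw [← Finset.sum_filter, Finset.sum_const, nsmul_eq_mul]
    have hcardR : ((Finset.univ.filter fun i : Fin (n+1) => (i:ℕ) < d).card : ℝ) ≤ d := by
      exact_mod_cast hcard
    have hgoal : ∑ j : Fin (min n d),
        (dS S (g ⟨(j:ℕ), by have := j.isLt; omega⟩)
              (g ⟨(j:ℕ)+1, by have := j.isLt; omega⟩) : ℝ) = Sd := by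
      rw [hSd]
      exact Finset.sum_congr rfl fun j _ => hsum_eq j
    rw [hgoal]
    nlinarith [hB, hSd_nonneg]
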